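/- Let C : ℕ → ℝ satisfy C_n ≥ 0 for all n ≥ 1, let a > b > 0 and 0 < s < t be reals, and suppose the series R(x) = Σ_{n=1}^∞ C_n x^{n−1} converges absolutely at x = s/a, s/b, t/a, and t/b. Then a·(s·R(s/b) − t·R(t/b)) + b·(t·R(t/a) − s·R(s/a)) ≤ 0. -/

import Mathlib

/-- The claim `F_{j,1} ≤ 0` from the proof of Theorem 1.
`R x = Σ_{n=1}^∞ C_n x^{n-1}` is a power series with nonnegative coefficients
(the R-transform of the limiting spectral measure), absolutely convergent at
`s/a`, `s/b`, `t/a`, `t/b`, where `a > b > 0` and `0 < s < t`.  Then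
`a (s R(s/b) - t R(t/b)) + b (t R(t/a) - s R(s/a)) ≤ 0`. -/
theorem Fj1_nonpos
    (C : ℕ → ℝ) (a b s t : ℝ)
    (hC : ∀ n : ℕ, 1 ≤ n → 0 ≤ C n)
    (hba : b < a) (hb : 0 < b) (hs : 0 < s) (hst : s < t)
    (R : ℝ → ℝ) (hR : ∀ x : ℝ, R x = ∑' n : ℕ, C (n + 1) * x ^ n)
    (hsa : Summable fun n : ℕ => |C (n + 1) * (s / a) ^ n|)
    (hsb : Summable fun n : ℕ => |C (n + 1) * (s / b) ^ n|)
    (hta : Summable fun n : ℕ => |C (n + 1) * (t / a) ^ n|)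
    (htb : Summable fun n : ℕ => |C (n + 1) * (t / b) ^ n|) :
    a * (s * R (s / b) - t * R (t / b)) + b * (t * R (t / a) - s * R (s / a)) ≤ 0 := by
  have ha : (0 : ℝ) < a := hb.trans hba
  have hsa' : Summable fun n : ℕ => C (n + 1) * (s / a) ^ n := summable_abs_iff.mp hsa
  have hsb' : Summable fun n : ℕ => C (n + 1) * (s / b) ^ n := summable_abs_iff.mp hsb
  have hta' : Summable fun n : ℕ => C (n + 1) * (t / a) ^ n := summable_abs_iff.mp hta
  have htb' : Summable fun n : ℕ => C (n + 1) * (t / b) ^ n := summable_abs_iff.mp htb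
  have h1 : Summable fun n : ℕ =>
      a * (s * (C (n + 1) * (s / b) ^ n) - t * (C (n + 1) * (t / b) ^ n)) :=
    (((hsb'.mul_left s).sub (htb'.mul_left t)).mul_left a)
  have h2 : Summable fun n : ℕ =>
      b * (t * (C (n + 1) * (t / a) ^ n) - s * (C (n + 1) * (s / a) ^ n)) :=
    (((hta'.mul_left t).sub (hsa'.mul_left s)).mul_left b)
  have key : a * (s * R (s / b) - t * R (t / b)) + b * (t * R (t / a) - s * R (s / a))
      = ∑' n : ℕ, (a * (s * (C (n + 1) * (s / b) ^ n) - t * (C (n + 1) * (t / b) ^ n))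
        + b * (t * (C (n + 1) * (t / a) ^ n) - s * (C (n + 1) * (s / a) ^ n))) := by
    rw [hR, hR, hR, hR, Summable.tsum_add h1 h2, tsum_mul_left, tsum_mul_left,
      Summable.tsum_sub (hsb'.mul_left s) (htb'.mul_left t),
      Summable.tsum_sub (hta'.mul_left t) (hsa'.mul_left s),
      tsum_mul_left, tsum_mul_left, tsum_mul_left, tsum_mul_left]
  rw [key]
  refine tsum_nonpos fun n => ?_
  have hC' : 0 ≤ C (n + 1) := hC (n + 1) (Nat.le_add_left 1 n)
  have halg : a * (s * (C (n + 1) * (s / b) ^ n) - t * (C (n + 1) * (t / b) ^ n))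
      + b * (t * (C (n + 1) * (t / a) ^ n) - s * (C (n + 1) * (s / a) ^ n))
      = C (n + 1) * ((s ^ (n + 1) - t ^ (n + 1)) * (a ^ (n + 1) - b ^ (n + 1)) / (a * b) ^ n) := by
    rw [div_pow, div_pow, div_pow, div_pow]
    field_simp
    ring
  rw [halg]
  apply mul_nonpos_of_nonneg_of_nonpos hC'
  apply div_nonpos_of_nonpos_of_nonneg
  · apply mul_nonpos_of_nonpos_of_nonneg
    · have := pow_le_pow_left₀ hs.le hst.le (n + 1)
      linarith
    · have := pow_le_pow_left₀ hb.le hba.le (n + 1)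
      linarith
  · positivity
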